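/- Let Ω ⊆ ℝ³ be a connected open set, let C be a twice continuously differentiable positive-definite symmetric 3×3 matrix field on Ω with Christoffel symbols Γ, and let F₁, F₂ : Ω → ℝ^{3×3} be continuously differentiable solutions of the Pfaffian system F_{iα,β} = Σ_ρ Γ^ρ_{αβ} F_{iρ}, with F₁(x) invertible for every x ∈ Ω. Then the matrix field x ↦ F₂(x) F₁(x)⁻¹ is constant on Ω. If in addition F₁(x)ᵀ F₁(x) = F₂(x)ᵀ F₂(x) = C(x) for all x ∈ Ω, then this constant matrix is orthogonal. -/

import Mathlib

noncomputable section

open Matrix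

/-- Points of 3-d Euclidean space, as triples of reals. -/
abbrev E3 : Type := Fin 3 → ℝ

/-- Partial derivative `∂_j f` of a scalar field `f` at `x`. -/
noncomputable def pd (j : Fin 3) (f : E3 → ℝ) (x : E3) : ℝ :=
  fderiv ℝ f x (Pi.single j 1)

/-- The Christoffel symbols `Γ^γ_{αβ}` of a positive-definite symmetric matrix field `C`:
`Γ^γ_{αβ} = ½ Σ_μ (C⁻¹)^{γμ}(C_{αμ,β} + C_{βμ,α} − C_{αβ,μ})`. -/
noncomputable def christoffel (C : E3 → Matrix (Fin 3) (Fin 3) ℝ)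
    (γ α β : Fin 3) (x : E3) : ℝ :=
  (1 / 2) * ∑ μ, (C x)⁻¹ γ μ *
    (pd β (fun y => C y α μ) x + pd α (fun y => C y β μ) x - pd μ (fun y => C y α β) x)

/-- `F` solves the Pfaffian system associated with `C` on `Ω`:
`F_{iα,β} = Σ_ρ Γ^ρ_{αβ} F_{iρ}` on `Ω`. -/
def SolvesPfaffian (C F : E3 → Matrix (Fin 3) (Fin 3) ℝ) (Ω : Set E3) : Prop :=
  ∀ x ∈ Ω, ∀ i α β : Fin 3,
    pd β (fun y => F y i α) x = ∑ ρ, christoffel C ρ α β x * F x i ρ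

lemma pd_congr {j : Fin 3} {f g : E3 → ℝ} {x : E3} (h : f =ᶠ[nhds x] g) :
    pd j f x = pd j g x := by unfold pd; rw [h.fderiv_eq]

lemma pd_const {j : Fin 3} {c : ℝ} {x : E3} : pd j (fun _ => c) x = 0 := by
  simp [pd]

lemma pd_mul {j : Fin 3} {f g : E3 → ℝ} {x : E3} (hf : DifferentiableAt ℝ f x)
    (hg : DifferentiableAt ℝ g x) :
    pd j (fun y => f y * g y) x = pd j f x * g x + f x * pd j g x := by
  unfold pd
  rw [fderiv_fun_mul hf hg]
  simp only [ContinuousLinearMap.add_apply, ContinuousLinearMap.smul_apply, smul_eq_mul]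
  ring

lemma pd_sum {j : Fin 3} {f : Fin 3 → E3 → ℝ} {x : E3}
    (hf : ∀ k, DifferentiableAt ℝ (f k) x) :
    pd j (fun y => ∑ k, f k y) x = ∑ k, pd j (f k) x := by
  unfold pd
  rw [fderiv_fun_sum (fun k _ => hf k)]
  simp

lemma const_of_pd_zero {Ω : Set E3} (hΩ : IsOpen Ω) (hconn : IsPreconnected Ω)
    {f : E3 → ℝ} (hdiff : ∀ x ∈ Ω, DifferentiableAt ℝ f x)
    (hpd : ∀ x ∈ Ω, fderiv ℝ f x = 0) :
    ∀ x ∈ Ω, ∀ z ∈ Ω, f x = f z := by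
  intro x hx z hz
  haveI : PreconnectedSpace Ω := Subtype.preconnectedSpace hconn
  have hloc : IsLocallyConstant (fun p : Ω => f p.1) := by
    rw [IsLocallyConstant.iff_exists_open]
    rintro ⟨y, hy⟩
    obtain ⟨r, hr, hball⟩ := Metric.isOpen_iff.1 hΩ y hy
    refine ⟨Subtype.val ⁻¹' Metric.ball y r, Metric.isOpen_ball.preimage continuous_subtype_val,
      Metric.mem_ball_self hr, ?_⟩
    rintro ⟨w, hw⟩ hwball
    exact (convex_ball y r).is_const_of_fderivWithin_eq_zero
      (fun u hu => (hdiff u (hball hu)).differentiableWithinAt)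
      (fun u hu => by rw [fderivWithin_of_isOpen Metric.isOpen_ball hu, hpd u (hball hu)])
      hwball (Metric.mem_ball_self hr)
  exact hloc.apply_eq_of_preconnectedSpace ⟨x, hx⟩ ⟨z, hz⟩

/-- For two C¹ solutions `F₁, F₂` of the Pfaffian system of a C² positive-definite
symmetric field `C` on a connected open `Ω ⊆ ℝ³` with `F₁` pointwise invertible, the
field `x ↦ F₂(x) F₁(x)⁻¹` is constant on `Ω`; if moreover `F₁ᵀF₁ = F₂ᵀF₂ = C` on `Ω`,
that constant matrix is orthogonal. -/
theorem weingarten_stmt11 (Ω : Set E3) (hΩ : IsOpen Ω) (hconn : IsConnected Ω)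
    (C : E3 → Matrix (Fin 3) (Fin 3) ℝ)
    (hCreg : ∀ a b, ContDiffOn ℝ 2 (fun x => C x a b) Ω)
    (hpos : ∀ x ∈ Ω, (C x).PosDef)
    (hsym : ∀ x ∈ Ω, (C x).IsSymm)
    (F₁ F₂ : E3 → Matrix (Fin 3) (Fin 3) ℝ)
    (hF₁reg : ∀ i a, ContDiffOn ℝ 1 (fun x => F₁ x i a) Ω)
    (hF₂reg : ∀ i a, ContDiffOn ℝ 1 (fun x => F₂ x i a) Ω)
    (hF₁ : SolvesPfaffian C F₁ Ω) (hF₂ : SolvesPfaffian C F₂ Ω)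
    (hF₁inv : ∀ x ∈ Ω, IsUnit (F₁ x)) :
    (∀ x ∈ Ω, ∀ z ∈ Ω, F₂ x * (F₁ x)⁻¹ = F₂ z * (F₁ z)⁻¹) ∧
    ((∀ x ∈ Ω, (F₁ x)ᵀ * F₁ x = C x ∧ (F₂ x)ᵀ * F₂ x = C x) →
      ∀ x ∈ Ω, (F₂ x * (F₁ x)⁻¹)ᵀ * (F₂ x * (F₁ x)⁻¹) = 1) := by
  have hdetu : ∀ x ∈ Ω, IsUnit (F₁ x).det := fun x hx =>
    (Matrix.isUnit_iff_isUnit_det _).1 (hF₁inv x hx)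
  have hdet_ne : ∀ x ∈ Ω, (F₁ x).det ≠ 0 := fun x hx => (hdetu x hx).ne_zero
  have hmul_inv : ∀ x ∈ Ω, F₁ x * (F₁ x)⁻¹ = 1 := fun x hx =>
    Matrix.mul_nonsing_inv _ (hdetu x hx)
  have hinv_mul : ∀ x ∈ Ω, (F₁ x)⁻¹ * F₁ x = 1 := fun x hx =>
    Matrix.nonsing_inv_mul _ (hdetu x hx)
  have hd1 : ∀ x ∈ Ω, ∀ a b, DifferentiableAt ℝ (fun y => F₁ y a b) x := fun x hx a b =>
    ((hF₁reg a b).contDiffAt (hΩ.mem_nhds hx)).differentiableAt one_ne_zero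
  have hd2 : ∀ x ∈ Ω, ∀ a b, DifferentiableAt ℝ (fun y => F₂ y a b) x := fun x hx a b =>
    ((hF₂reg a b).contDiffAt (hΩ.mem_nhds hx)).differentiableAt one_ne_zero
  have hdet_diff : ∀ x ∈ Ω, DifferentiableAt ℝ (fun y => (F₁ y).det) x := by
    intro x hx
    have h := hd1 x hx
    simp only [Matrix.det_fin_three]
    exact (((((((h 0 0).mul (h 1 1)).mul (h 2 2)).sub
      (((h 0 0).mul (h 1 2)).mul (h 2 1))).sub
      (((h 0 1).mul (h 1 0)).mul (h 2 2))).add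
      (((h 0 1).mul (h 1 2)).mul (h 2 0))).add
      (((h 0 2).mul (h 1 0)).mul (h 2 1))).sub
      (((h 0 2).mul (h 1 1)).mul (h 2 0))
  have hadj_diff : ∀ x ∈ Ω, ∀ a b, DifferentiableAt ℝ (fun y => (F₁ y).adjugate a b) x := by
    intro x hx a b
    have h := hd1 x hx
    fin_cases a <;> fin_cases b <;>
      simp only [Matrix.adjugate_fin_three, Matrix.cons_val', Matrix.cons_val_zero,
        Matrix.cons_val_one, Matrix.head_cons, Matrix.empty_val', Matrix.cons_val_fin_one,
        Matrix.head_fin_const, Matrix.cons_val_two, Matrix.tail_cons, Matrix.of_apply,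
        Fin.isValue] <;>
      first
        | exact ((h _ _).mul (h _ _)).sub ((h _ _).mul (h _ _))
        | exact (((h _ _).mul (h _ _)).neg).add ((h _ _).mul (h _ _))
  have hinv_entry : ∀ (y : E3) (a b : Fin 3),
      (F₁ y)⁻¹ a b = ((F₁ y).det)⁻¹ * (F₁ y).adjugate a b := by
    intro y a b
    rw [Matrix.inv_def, Ring.inverse_eq_inv']
    simp [Matrix.smul_apply]
  have hinv_diff : ∀ x ∈ Ω, ∀ a b, DifferentiableAt ℝ (fun y => (F₁ y)⁻¹ a b) x := by
    intro x hx a b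
    have e : (fun y => (F₁ y)⁻¹ a b) = fun y => ((F₁ y).det)⁻¹ * (F₁ y).adjugate a b :=
      funext fun y => hinv_entry y a b
    rw [e]
    exact ((hdet_diff x hx).inv (hdet_ne x hx)).mul (hadj_diff x hx a b)
  have hGfun : ∀ i j : Fin 3, (fun y => (F₂ y * (F₁ y)⁻¹) i j)
      = fun y => ∑ k, F₂ y i k * (F₁ y)⁻¹ k j :=
    fun i j => funext fun y => Matrix.mul_apply
  have hGdiff : ∀ x ∈ Ω, ∀ i j, DifferentiableAt ℝ (fun y => (F₂ y * (F₁ y)⁻¹) i j) x := by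
    intro x hx i j
    rw [hGfun i j]
    exact DifferentiableAt.fun_sum fun k _ => (hd2 x hx i k).mul (hinv_diff x hx k j)
  -- the key computation: all partial derivatives of the entries of F₂ F₁⁻¹ vanish on Ω
  have hGpd : ∀ x ∈ Ω, ∀ (β i j : Fin 3),
      pd β (fun y => (F₂ y * (F₁ y)⁻¹) i j) x = 0 := by
    intro x hx β i j
    set M : Matrix (Fin 3) (Fin 3) ℝ := Matrix.of fun ρ α => christoffel C ρ α β x with hM
    set dF1 : Matrix (Fin 3) (Fin 3) ℝ :=
      Matrix.of fun a b => pd β (fun y => F₁ y a b) x with hdF1def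
    set dF2 : Matrix (Fin 3) (Fin 3) ℝ :=
      Matrix.of fun a b => pd β (fun y => F₂ y a b) x with hdF2def
    set dInv : Matrix (Fin 3) (Fin 3) ℝ :=
      Matrix.of fun a b => pd β (fun y => (F₁ y)⁻¹ a b) x with hdInvdef
    have hdF1 : dF1 = F₁ x * M := by
      ext a b
      rw [hdF1def]
      show pd β (fun y => F₁ y a b) x = (F₁ x * M) a b
      rw [hF₁ x hx a b β, Matrix.mul_apply]
      exact Finset.sum_congr rfl fun ρ _ => mul_comm _ _
    have hdF2 : dF2 = F₂ x * M := by
      ext a b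
      rw [hdF2def]
      show pd β (fun y => F₂ y a b) x = (F₂ x * M) a b
      rw [hF₂ x hx a b β, Matrix.mul_apply]
      exact Finset.sum_congr rfl fun ρ _ => mul_comm _ _
    have claim1 : dInv * F₁ x + (F₁ x)⁻¹ * dF1 = 0 := by
      ext k l
      have hev : (fun y => ∑ m, (F₁ y)⁻¹ k m * F₁ y m l)
          =ᶠ[nhds x] fun _ => (1 : Matrix (Fin 3) (Fin 3) ℝ) k l := by
        filter_upwards [hΩ.mem_nhds hx] with y hy
        rw [← Matrix.mul_apply, hinv_mul y hy]
      have hz : pd β (fun y => ∑ m, (F₁ y)⁻¹ k m * F₁ y m l) x = 0 := by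
        rw [pd_congr hev]; exact pd_const
      have hexp : pd β (fun y => ∑ m, (F₁ y)⁻¹ k m * F₁ y m l) x
          = ∑ m, (dInv k m * F₁ x m l + (F₁ x)⁻¹ k m * dF1 m l) := by
        rw [pd_sum fun m => (hinv_diff x hx k m).fun_mul (hd1 x hx m l)]
        exact Finset.sum_congr rfl fun m _ => pd_mul (hinv_diff x hx k m) (hd1 x hx m l)
      have := hexp ▸ hz
      simpa [Matrix.add_apply, Matrix.mul_apply, Matrix.zero_apply,
        Finset.sum_add_distrib] using this
    have hdInv : dInv = -(M * (F₁ x)⁻¹) := by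
      have h1 : dInv * F₁ x = -M := by
        have h2 : dInv * F₁ x = -((F₁ x)⁻¹ * dF1) :=
          eq_neg_of_add_eq_zero_left claim1
        rw [h2, hdF1, ← Matrix.mul_assoc, hinv_mul x hx, Matrix.one_mul]
      calc dInv = dInv * (F₁ x * (F₁ x)⁻¹) := by rw [hmul_inv x hx, Matrix.mul_one]
        _ = (dInv * F₁ x) * (F₁ x)⁻¹ := by rw [Matrix.mul_assoc]
        _ = -M * (F₁ x)⁻¹ := by rw [h1]
        _ = -(M * (F₁ x)⁻¹) := by rw [Matrix.neg_mul]
    have hkey : dF2 * (F₁ x)⁻¹ + F₂ x * dInv = 0 := by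
      rw [hdF2, hdInv, Matrix.mul_neg, Matrix.mul_assoc, add_neg_cancel]
    have hexp2 : pd β (fun y => (F₂ y * (F₁ y)⁻¹) i j) x
        = (dF2 * (F₁ x)⁻¹ + F₂ x * dInv) i j := by
      rw [hGfun i j]
      rw [pd_sum fun k => (hd2 x hx i k).fun_mul (hinv_diff x hx k j)]
      rw [Matrix.add_apply, Matrix.mul_apply, Matrix.mul_apply, ← Finset.sum_add_distrib]
      exact Finset.sum_congr rfl fun k _ => pd_mul (hd2 x hx i k) (hinv_diff x hx k j)
    rw [hexp2, hkey, Matrix.zero_apply]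
  have hGfd : ∀ x ∈ Ω, ∀ i j, fderiv ℝ (fun y => (F₂ y * (F₁ y)⁻¹) i j) x = 0 := by
    intro x hx i j
    refine ContinuousLinearMap.ext fun v => ?_
    rw [ContinuousLinearMap.zero_apply]
    have hv : v = v 0 • (Pi.single 0 1 : E3) + v 1 • (Pi.single 1 1 : E3) + v 2 • (Pi.single 2 1 : E3) := by
      funext m; fin_cases m <;> simp [Pi.single_apply]
    rw [hv, map_add, map_add, ContinuousLinearMap.map_smul, ContinuousLinearMap.map_smul, ContinuousLinearMap.map_smul]
    have h0 := hGpd x hx 0 i j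
    have h1 := hGpd x hx 1 i j
    have h2 := hGpd x hx 2 i j
    unfold pd at h0 h1 h2
    rw [h0, h1, h2]
    simp
  constructor
  · intro x hx z hz
    ext i j
    exact const_of_pd_zero hΩ hconn.isPreconnected
      (fun u hu => hGdiff u hu i j) (fun u hu => hGfd u hu i j) x hx z hz
  · intro h x hx
    obtain ⟨h1, h2⟩ := h x hx
    have key : (F₂ x)ᵀ * F₂ x = (F₁ x)ᵀ * F₁ x := h2.trans h1.symm
    have hu := hdetu x hx
    have hut : IsUnit ((F₁ x)ᵀ).det := by rwa [Matrix.det_transpose]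
    rw [Matrix.transpose_mul, Matrix.transpose_nonsing_inv]
    calc ((F₁ x)ᵀ)⁻¹ * (F₂ x)ᵀ * (F₂ x * (F₁ x)⁻¹)
        = ((F₁ x)ᵀ)⁻¹ * (((F₂ x)ᵀ * F₂ x) * (F₁ x)⁻¹) := by
          rw [Matrix.mul_assoc, Matrix.mul_assoc]
      _ = ((F₁ x)ᵀ)⁻¹ * (((F₁ x)ᵀ * F₁ x) * (F₁ x)⁻¹) := by rw [key]
      _ = ((F₁ x)ᵀ)⁻¹ * ((F₁ x)ᵀ * (F₁ x * (F₁ x)⁻¹)) := by rw [Matrix.mul_assoc]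
      _ = ((F₁ x)ᵀ)⁻¹ * (F₁ x)ᵀ := by rw [hmul_inv x hx, Matrix.mul_one]
      _ = 1 := Matrix.nonsing_inv_mul _ hut
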